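/- arXiv:2510.24056 — 2 statements merged into one kernel-verified Lean document; each statement's English description precedes it below -/
import Mathlib

section
/- Let d ≥ 1 and let c₀ : ℝᵈ → ℝ be continuously differentiable and strictly positive on the open cube (0,1)ᵈ. Let g : ℝᵈ → ℝᵈ have components g₁,…,g_d that are continuously differentiable on (0,1)ᵈ, extend continuously to the closed cube [0,1]ᵈ, and satisfy the boundary conditions g_j(u) = 0 whenever u_j = 0 or u_j = 1. Assume that for every j the functions u ↦ ∂_{u_j}g_j(u)·c₀(u) and u ↦ g_j(u)·∂_{u_j}c₀(u) are Lebesgue integrable on (0,1)ᵈ. Then ∫_{(0,1)ᵈ} Σ_{j=1}^d [∂_{u_j}g_j(u)·c₀(u) + g_j(u)·∂_{u_j}c₀(u)] du = 0; equivalently, ∫_{(0,1)ᵈ} Σ_{j=1}^d [∂_{u_j}g_j(u) + g_j(u)·∂_{u_j}log c₀(u)] c₀(u) du = 0. -/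
open MeasureTheory

/-- Partial derivative in the `j`-th coordinate of a scalar function on `Fin d → ℝ`. -/
noncomputable def pderivCoord {d : ℕ} (j : Fin d) (f : (Fin d → ℝ) → ℝ)
    (u : Fin d → ℝ) : ℝ :=
  deriv (fun x => f (Function.update u j x)) (u j)

section SteinAux
open Set Filter intervalIntegral

/-- FTC representation: a function with integrable derivative on (0,1) has limits at the
endpoints, and the integral of the derivative is the difference of the limits. -/
lemma limits_of_integrable_deriv (h F : ℝ → ℝ)
    (hder : ∀ x ∈ Ioo (0:ℝ) 1, HasDerivAt h (F x) x)
    (hint : Integrable F) :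
    ∃ L₀ L₁, Tendsto h (nhdsWithin 0 (Ioi 0)) (nhds L₀) ∧
      Tendsto h (nhdsWithin 1 (Iio 1)) (nhds L₁) ∧
      (∫ x in Ioo (0:ℝ) 1, F x) = L₁ - L₀ := by
  set H : ℝ → ℝ := fun x => ∫ t in (1/2 : ℝ)..x, F t with hH
  have Hcont : Continuous H := hint.continuous_primitive (1/2)
  have hhalf : (1/2 : ℝ) ∈ Ioo (0:ℝ) 1 := by norm_num
  have key : ∀ x ∈ Ioo (0:ℝ) 1, h x = h (1/2) + H x := by
    intro x hx
    have hsub : uIcc (1/2 : ℝ) x ⊆ Ioo 0 1 :=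
      (Set.ordConnected_Ioo).uIcc_subset hhalf hx
    have := integral_eq_sub_of_hasDerivAt (f := h) (f' := F)
      (fun t ht => hder t (hsub ht)) hint.intervalIntegrable
    simp only [hH]
    linarith [this]
  refine ⟨h (1/2) + H 0, h (1/2) + H 1, ?_, ?_, ?_⟩
  · have t1 : Tendsto (fun x => h (1/2) + H x) (nhdsWithin 0 (Ioi 0))
        (nhds (h (1/2) + H 0)) :=
      ((continuous_const.add Hcont).tendsto 0).mono_left nhdsWithin_le_nhds
    refine t1.congr' ?_
    filter_upwards [Ioo_mem_nhdsGT_of_mem (by norm_num : (0:ℝ) ∈ Ico (0:ℝ) 1)] with x hx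
    exact (key x hx).symm
  · have t1 : Tendsto (fun x => h (1/2) + H x) (nhdsWithin 1 (Iio 1))
        (nhds (h (1/2) + H 1)) :=
      ((continuous_const.add Hcont).tendsto 1).mono_left nhdsWithin_le_nhds
    refine t1.congr' ?_
    filter_upwards [Ioo_mem_nhdsLT_of_mem (by norm_num : (1:ℝ) ∈ Ioc (0:ℝ) 1)] with x hx
    exact (key x hx).symm
  · have e1 : (∫ x in Ioo (0:ℝ) 1, F x) = ∫ x in (0:ℝ)..1, F x := by
      rw [intervalIntegral.integral_of_le (by norm_num : (0:ℝ) ≤ 1),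
        integral_Ioc_eq_integral_Ioo]
    have e2 : H 1 - H 0 = ∫ x in (0:ℝ)..1, F x := by
      simp only [hH]
      rw [intervalIntegral.integral_interval_sub_left hint.intervalIntegrable
        hint.intervalIntegrable]
    rw [e1, ← e2]; ring

lemma not_pos_limit_left (G DG C : ℝ → ℝ) {L : ℝ}
    (hG : ∀ x ∈ Ioo (0:ℝ) 1, HasDerivAt G (DG x) x)
    (hCcont : ContinuousOn C (Ioo 0 1))
    (hCpos : ∀ x ∈ Ioo (0:ℝ) 1, 0 < C x)
    (h1 : IntegrableOn (fun x => DG x * C x) (Ioo 0 1))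
    (hGlim : Tendsto G (nhdsWithin 0 (Ioi 0)) (nhds 0))
    (hlim : Tendsto (fun x => G x * C x) (nhdsWithin 0 (Ioi 0)) (nhds L))
    (hL : 0 < L) : False := by
  have hev : ∀ᶠ x in nhdsWithin 0 (Ioi 0), L / 2 < G x * C x :=
    hlim.eventually (lt_mem_nhds (by linarith))
  have hev2 : ∀ᶠ x in nhdsWithin 0 (Ioi 0), x ∈ Ioo (0:ℝ) 1 :=
    Ioo_mem_nhdsGT_of_mem (by norm_num : (0:ℝ) ∈ Ico (0:ℝ) 1)
  obtain ⟨ε, hε0, hεP'⟩ := (nhdsGT_basis (0:ℝ)).eventually_iff.1 (hev.and hev2)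
  have hεP : ∀ x ∈ Ioo (0:ℝ) ε, L / 2 < G x * C x ∧ x ∈ Ioo (0:ℝ) 1 := hεP'
  clear hεP'
  have hsub : Ioo (0:ℝ) ε ⊆ Ioo (0:ℝ) 1 := fun x hx => (hεP x hx).2
  have hGpos : ∀ x ∈ Ioo (0:ℝ) ε, 0 < G x := by
    intro x hx
    have h' := hεP x hx
    have hCx := hCpos x h'.2
    nlinarith [h'.1]
  have hqeq : ∀ x ∈ Ioo (0:ℝ) ε, DG x / G x = (DG x * C x) / (G x * C x) := by
    intro x hx
    have hCx := hCpos x (hsub hx)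
    rw [mul_div_mul_right _ _ (ne_of_gt hCx)]
  have h1' : IntegrableOn (fun x => DG x * C x) (Ioo 0 ε) := h1.mono_set hsub
  have hqint : IntegrableOn (fun x => DG x / G x) (Ioo 0 ε) := by
    refine Integrable.mono' (g := fun x => (2 / L) * |DG x * C x|)
      ((h1'.norm).const_mul _) ?_ ?_
    · have hGC : AEStronglyMeasurable (fun x => G x * C x)
          (volume.restrict (Ioo (0:ℝ) ε)) := by
        have hGcont : ContinuousOn G (Ioo 0 1) := fun x hx =>
          (hG x hx).continuousAt.continuousWithinAt
        exact ((hGcont.mono hsub).mul (hCcont.mono hsub)).aestronglyMeasurable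
          measurableSet_Ioo
      have hm : AEStronglyMeasurable (fun x => (DG x * C x) * (G x * C x)⁻¹)
          (volume.restrict (Ioo (0:ℝ) ε)) :=
        (h1'.aemeasurable.mul hGC.aemeasurable.inv).aestronglyMeasurable
      refine hm.congr ?_
      filter_upwards [ae_restrict_mem measurableSet_Ioo] with x hx
      rw [← div_eq_mul_inv]
      exact (hqeq x hx).symm
    · filter_upwards [ae_restrict_mem measurableSet_Ioo] with x hx
      have hden : L / 2 < G x * C x := (hεP x hx).1
      rw [Real.norm_eq_abs, hqeq x hx, abs_div,
        abs_of_pos (lt_trans (by linarith) hden),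
        div_le_iff₀ (by linarith)]
      calc |DG x * C x| = 1 * |DG x * C x| := (one_mul _).symm
        _ ≤ (2 / L * |DG x * C x|) * (G x * C x) := by
            rcases eq_or_ne (DG x * C x) 0 with h0 | h0
            · simp [h0]
            · have h2 : (1:ℝ) ≤ 2 / L * (G x * C x) := by
                rw [div_mul_eq_mul_div, le_div_iff₀ hL]
                linarith
              nlinarith [abs_pos.2 h0, abs_nonneg (DG x * C x)]
  -- FTC bound
  set b : ℝ := ε / 2 with hb
  have hbmem : b ∈ Ioo (0:ℝ) ε := ⟨by positivity, by simp [hb]; linarith⟩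
  set M : ℝ := ∫ t in Ioo (0:ℝ) ε, |DG t / G t| with hM
  have hlow : ∀ x ∈ Ioo (0:ℝ) b, Real.exp (Real.log (G b) - M) ≤ G x := by
    intro x hx
    have hxε : x ∈ Ioo (0:ℝ) ε := ⟨hx.1, lt_trans hx.2 hbmem.2⟩
    have hxb : x ≤ b := le_of_lt hx.2
    have hIcc : Icc x b ⊆ Ioo (0:ℝ) ε := fun t ht =>
      ⟨lt_of_lt_of_le hx.1 ht.1, lt_of_le_of_lt ht.2 hbmem.2⟩
    have hftc : ∫ t in x..b, DG t / G t
        = Real.log (G b) - Real.log (G x) := by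
      refine integral_eq_sub_of_hasDerivAt (f := fun t => Real.log (G t))
        (f' := fun t => DG t / G t) (fun t ht => ?_) ?_
      · have htm : t ∈ Ioo (0:ℝ) ε := hIcc (by rwa [uIcc_of_le hxb] at ht)
        exact (hG t (hsub htm)).log (ne_of_gt (hGpos t htm))
      · refine IntegrableOn.intervalIntegrable ?_
        rw [uIcc_of_le hxb]
        exact hqint.mono_set hIcc
    have hbound : ∫ t in x..b, DG t / G t ≤ M := by
      have h1'' : |∫ t in x..b, DG t / G t| ≤ ∫ t in x..b, |DG t / G t| :=
        intervalIntegral.abs_integral_le_integral_abs hxb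
      have h2'' : ∫ t in x..b, |DG t / G t| ≤ M := by
        rw [intervalIntegral.integral_of_le hxb, hM]
        refine setIntegral_mono_set hqint.norm ?_ ?_
        · filter_upwards with t using abs_nonneg _
        · refine HasSubset.Subset.eventuallyLE fun t ht => ?_
          exact ⟨lt_of_lt_of_le hx.1 (le_of_lt ht.1), lt_of_le_of_lt ht.2 hbmem.2⟩
      exact le_trans (le_abs_self _) (le_trans h1'' h2'')
    have hlog : Real.log (G b) - M ≤ Real.log (G x) := by linarith
    calc Real.exp (Real.log (G b) - M) ≤ Real.exp (Real.log (G x)) :=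
          Real.exp_le_exp.2 hlog
      _ = G x := Real.exp_log (hGpos x hxε)
  -- contradiction with G → 0
  set δ : ℝ := Real.exp (Real.log (G b) - M) with hδ
  have hδpos : 0 < δ := Real.exp_pos _
  have hev3 : ∀ᶠ x in nhdsWithin 0 (Ioi 0), G x < δ :=
    hGlim.eventually (gt_mem_nhds hδpos)
  have hev4 : ∀ᶠ x in nhdsWithin 0 (Ioi 0), x ∈ Ioo (0:ℝ) b :=
    Ioo_mem_nhdsGT_of_mem ⟨le_refl _, hbmem.1⟩
  obtain ⟨x, hx1, hx2⟩ := (hev3.and hev4).exists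
  exact absurd (hlow x hx2) (not_le.2 hx1)

lemma limit_left_zero (G DG C : ℝ → ℝ) {L : ℝ}
    (hG : ∀ x ∈ Ioo (0:ℝ) 1, HasDerivAt G (DG x) x)
    (hCcont : ContinuousOn C (Ioo 0 1))
    (hCpos : ∀ x ∈ Ioo (0:ℝ) 1, 0 < C x)
    (h1 : IntegrableOn (fun x => DG x * C x) (Ioo 0 1))
    (hGlim : Tendsto G (nhdsWithin 0 (Ioi 0)) (nhds 0))
    (hlim : Tendsto (fun x => G x * C x) (nhdsWithin 0 (Ioi 0)) (nhds L)) :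
    L = 0 := by
  by_contra hne
  rcases (Ne.lt_or_gt hne) with h | h
  · refine not_pos_limit_left (fun x => -G x) (fun x => -DG x) C
      (fun x hx => (hG x hx).neg) hCcont hCpos ?_ ?_ ?_ (L := -L) (by linarith)
    · refine (h1.neg).congr (Filter.Eventually.of_forall fun x => ?_)
      simp [neg_mul]
    · simpa using hGlim.neg
    · have := hlim.neg
      simp only [neg_mul] at this ⊢
      simpa using this
  · exact not_pos_limit_left G DG C hG hCcont hCpos h1 hGlim hlim h

lemma limit_right_zero (G DG C : ℝ → ℝ) {L : ℝ}
    (hG : ∀ x ∈ Ioo (0:ℝ) 1, HasDerivAt G (DG x) x)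
    (hCcont : ContinuousOn C (Ioo 0 1))
    (hCpos : ∀ x ∈ Ioo (0:ℝ) 1, 0 < C x)
    (h1 : IntegrableOn (fun x => DG x * C x) (Ioo 0 1))
    (hGlim : Tendsto G (nhdsWithin 1 (Iio 1)) (nhds 0))
    (hlim : Tendsto (fun x => G x * C x) (nhdsWithin 1 (Iio 1)) (nhds L)) :
    L = 0 := by
  set r : ℝ → ℝ := fun t => 1 - t with hr
  have hrmem : ∀ t ∈ Ioo (0:ℝ) 1, r t ∈ Ioo (0:ℝ) 1 := by
    intro t ht; constructor <;> simp [hr] <;> [linarith [ht.2]; linarith [ht.1]]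
  have hrt : Tendsto r (nhdsWithin 0 (Ioi 0)) (nhdsWithin 1 (Iio 1)) := by
    have h0 : Tendsto r (nhds 0) (nhds 1) := by
      have h1' : Continuous r := by
        rw [hr]; exact continuous_const.sub continuous_id
      have := h1'.tendsto (0:ℝ)
      simpa [hr] using this
    refine tendsto_nhdsWithin_iff.2 ⟨h0.mono_left nhdsWithin_le_nhds, ?_⟩
    filter_upwards [eventually_mem_nhdsWithin] with x hx
    simp only [hr, mem_Iio]
    have : (0:ℝ) < x := hx
    linarith
  have hrd : ∀ t : ℝ, HasDerivAt r (-1) t := fun t => by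
    simpa using ((hasDerivAt_id t).const_sub 1)
  have hGr : ∀ x ∈ Ioo (0:ℝ) 1, HasDerivAt (fun t => G (r t)) (-DG (r x)) x := by
    intro x hx
    have := (hG (r x) (hrmem x hx)).comp x (hrd x)
    simpa [mul_comm, Function.comp_def] using this
  have hint : IntegrableOn (fun t => -DG (r t) * C (r t)) (Ioo 0 1) := by
    have hpre : r ⁻¹' (Ioo (0:ℝ) 1) = Ioo (0:ℝ) 1 := by
      rw [hr]; rw [show (fun t : ℝ => 1 - t) = fun t => 1 - t from rfl]
      rw [preimage_const_sub_Ioo]; norm_num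
    have := (Measure.measurePreserving_sub_left (volume : Measure ℝ) 1).integrableOn_comp_preimage
      (MeasurableEquiv.subLeft (1:ℝ)).measurableEmbedding
      (f := fun x => DG x * C x) (s := Ioo (0:ℝ) 1)
    have h2 : IntegrableOn ((fun x => DG x * C x) ∘ r) (r ⁻¹' Ioo (0:ℝ) 1) := this.2 h1
    rw [hpre] at h2
    refine (h2.neg).congr (Filter.Eventually.of_forall fun x => ?_)
    simp [Function.comp, neg_mul]
  have := limit_left_zero (fun t => G (r t)) (fun t => -DG (r t)) (fun t => C (r t))
    hGr (hCcont.comp ((continuous_const.sub continuous_id).continuousOn) hrmem)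
    (fun x hx => hCpos _ (hrmem x hx)) hint (hGlim.comp hrt) (hlim.comp hrt)
  exact this

end SteinAux

section SteinAux1
open Set Filter intervalIntegral

/-- One-dimensional integration-by-parts identity on (0,1). -/
lemma oned_ibp (G DG C DC : ℝ → ℝ)
    (hGc : ContinuousOn G (Icc 0 1))
    (hG : ∀ x ∈ Ioo (0:ℝ) 1, HasDerivAt G (DG x) x)
    (hC : ∀ x ∈ Ioo (0:ℝ) 1, HasDerivAt C (DC x) x)
    (hCpos : ∀ x ∈ Ioo (0:ℝ) 1, 0 < C x)
    (hG0 : G 0 = 0) (hG1 : G 1 = 0)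
    (h1 : IntegrableOn (fun x => DG x * C x) (Ioo 0 1))
    (h2 : IntegrableOn (fun x => G x * DC x) (Ioo 0 1)) :
    ∫ x in Ioo (0:ℝ) 1, (DG x * C x + G x * DC x) = 0 := by
  set F : ℝ → ℝ := fun x => DG x * C x + G x * DC x with hF
  set Ft : ℝ → ℝ := (Ioo (0:ℝ) 1).indicator F with hFt
  have hFint : IntegrableOn F (Ioo (0:ℝ) 1) := h1.add h2
  have hFtint : Integrable Ft := by
    rw [hFt, integrable_indicator_iff measurableSet_Ioo]; exact hFint
  have hder : ∀ x ∈ Ioo (0:ℝ) 1, HasDerivAt (fun x => G x * C x) (Ft x) x := by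
    intro x hx
    have : Ft x = F x := indicator_of_mem hx F
    rw [this, hF]
    exact (hG x hx).mul (hC x hx)
  obtain ⟨L₀, L₁, hT0, hT1, hInt⟩ := limits_of_integrable_deriv _ Ft hder hFtint
  have hCcont : ContinuousOn C (Ioo 0 1) := fun x hx =>
    (hC x hx).continuousAt.continuousWithinAt
  -- G tends to 0 at both endpoints
  have hsub : Ioo (0:ℝ) 1 ⊆ Icc 0 1 := Ioo_subset_Icc_self
  have hle0 : nhdsWithin (0:ℝ) (Ioi 0) ≤ nhdsWithin 0 (Ioo (0:ℝ) 1) :=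
    nhdsWithin_le_of_mem (Ioo_mem_nhdsGT_of_mem (by norm_num : (0:ℝ) ∈ Ico (0:ℝ) 1))
  have hle1 : nhdsWithin (1:ℝ) (Iio 1) ≤ nhdsWithin 1 (Ioo (0:ℝ) 1) :=
    nhdsWithin_le_of_mem (Ioo_mem_nhdsLT_of_mem (by norm_num : (1:ℝ) ∈ Ioc (0:ℝ) 1))
  have hG0' : Tendsto G (nhdsWithin 0 (Ioi 0)) (nhds 0) := by
    have := (hGc.continuousWithinAt (by norm_num : (0:ℝ) ∈ Icc (0:ℝ) 1))
    rw [ContinuousWithinAt, hG0] at this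
    exact (this.mono_left (nhdsWithin_mono _ hsub)).mono_left hle0
  have hG1' : Tendsto G (nhdsWithin 1 (Iio 1)) (nhds 0) := by
    have := (hGc.continuousWithinAt (by norm_num : (1:ℝ) ∈ Icc (0:ℝ) 1))
    rw [ContinuousWithinAt, hG1] at this
    exact (this.mono_left (nhdsWithin_mono _ hsub)).mono_left hle1
  have hL0 : L₀ = 0 := limit_left_zero G DG C hG hCcont hCpos h1 hG0' hT0
  have hL1 : L₁ = 0 := limit_right_zero G DG C hG hCcont hCpos h1 hG1' hT1
  have : (∫ x in Ioo (0:ℝ) 1, Ft x) = ∫ x in Ioo (0:ℝ) 1, F x :=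
    setIntegral_congr_fun measurableSet_Ioo fun x hx => indicator_of_mem hx F
  rw [hF] at this
  rw [← this, hInt, hL0, hL1, sub_zero]

end SteinAux1

section SteinAux2
open Set Filter

lemma differentiableAt_update_line {d : ℕ} (j : Fin d) (u : Fin d → ℝ) :
    DifferentiableAt ℝ (fun x : ℝ => Function.update u j x) (u j) := by
  have heq : (fun x : ℝ => Function.update u j x)
      = fun x : ℝ => Function.update u j 0 + x • (Pi.single j 1 : Fin d → ℝ) := by
    funext x i
    by_cases h : i = j
    · subst h; simp
    · simp [Function.update_of_ne h, Pi.single_eq_of_ne h]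
  rw [heq]
  exact (differentiableAt_const _).add (differentiableAt_id.smul_const _)

lemma hasDerivAt_pderivCoord {d : ℕ} (j : Fin d) (f : (Fin d → ℝ) → ℝ)
    (u : Fin d → ℝ) (hf : DifferentiableAt ℝ f u) :
    HasDerivAt (fun x => f (Function.update u j x)) (pderivCoord j f u) (u j) := by
  have h1 : DifferentiableAt ℝ (fun x : ℝ => f (Function.update u j x)) (u j) := by
    have hf' : DifferentiableAt ℝ f (Function.update u j (u j)) := by
      rwa [Function.update_eq_self]
    exact hf'.comp (u j) (differentiableAt_update_line j u)
  exact h1.hasDerivAt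

lemma coord_integral_zero {n : ℕ} (j : Fin (n + 1))
    (c₀ G1 : (Fin (n+1) → ℝ) → ℝ)
    (hc : ContDiffOn ℝ 1 c₀ (univ.pi fun _ => Ioo (0:ℝ) 1))
    (hcpos : ∀ u ∈ univ.pi fun _ : Fin (n+1) => Ioo (0:ℝ) 1, 0 < c₀ u)
    (hg : ContDiffOn ℝ 1 G1 (univ.pi fun _ => Ioo (0:ℝ) 1))
    (hgcont : ContinuousOn G1 (univ.pi fun _ => Icc (0:ℝ) 1))
    (hbdry : ∀ u ∈ univ.pi fun _ : Fin (n+1) => Icc (0:ℝ) 1,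
      (u j = 0 ∨ u j = 1) → G1 u = 0)
    (hint1 : IntegrableOn (fun u => pderivCoord j G1 u * c₀ u)
      (univ.pi fun _ => Ioo (0:ℝ) 1))
    (hint2 : IntegrableOn (fun u => G1 u * pderivCoord j c₀ u)
      (univ.pi fun _ => Ioo (0:ℝ) 1)) :
    ∫ u in univ.pi fun _ : Fin (n+1) => Ioo (0:ℝ) 1,
      (pderivCoord j G1 u * c₀ u + G1 u * pderivCoord j c₀ u) = 0 := by
  set Ω : Set (Fin (n+1) → ℝ) := univ.pi fun _ => Ioo (0:ℝ) 1 with hΩdef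
  have hΩmeas : MeasurableSet Ω := MeasurableSet.univ_pi fun _ => measurableSet_Ioo
  have hΩopen : IsOpen Ω := isOpen_set_pi finite_univ fun _ _ => isOpen_Ioo
  set F : (Fin (n+1) → ℝ) → ℝ :=
    fun u => pderivCoord j G1 u * c₀ u + G1 u * pderivCoord j c₀ u with hFdef
  set F1 : (Fin (n+1) → ℝ) → ℝ := fun u => pderivCoord j G1 u * c₀ u with hF1def
  set F2 : (Fin (n+1) → ℝ) → ℝ := fun u => G1 u * pderivCoord j c₀ u with hF2def
  set e : (Fin (n+1) → ℝ) ≃ᵐ ℝ × (Fin n → ℝ) :=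
    MeasurableEquiv.piFinSuccAbove (fun _ => ℝ) j with hedef
  have mp : MeasurePreserving e.symm volume volume :=
    (volume_preserving_piFinSuccAbove (fun _ : Fin (n+1) => ℝ) j).symm e
  -- transport integrability of indicators
  have hind : ∀ φ : (Fin (n+1) → ℝ) → ℝ, IntegrableOn φ Ω →
      Integrable (fun p : ℝ × (Fin n → ℝ) => Ω.indicator φ (e.symm p))
        (volume.prod volume) := by
    intro φ hφ
    have h1 : Integrable (Ω.indicator φ) volume :=
      (integrable_indicator_iff hΩmeas).2 hφ
    have := (mp.integrable_comp_emb e.symm.measurableEmbedding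
      (g := Ω.indicator φ)).2 h1
    rwa [Measure.volume_eq_prod] at this
  -- main rewriting
  have step1 : (∫ u in Ω, F u) = ∫ p : ℝ × (Fin n → ℝ),
      Ω.indicator F (e.symm p) ∂(volume.prod volume) := by
    rw [← integral_indicator hΩmeas, ← mp.integral_comp' (Ω.indicator F),
      Measure.volume_eq_prod]
  rw [step1, integral_prod_symm _ (hind F (hint1.add hint2))]
  refine integral_eq_zero_of_ae ?_
  have A1 := (hind F1 hint1).prod_left_ae
  have A2 := (hind F2 hint2).prod_left_ae
  filter_upwards [A1, A2] with y hy1 hy2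
  -- the slice map
  set w : ℝ → (Fin (n+1) → ℝ) := fun x => j.insertNth x y with hwdef
  have hesymm : ∀ x : ℝ, e.symm (x, y) = w x := by
    intro x
    simp [hedef, hwdef, MeasurableEquiv.piFinSuccAbove_symm_apply, Fin.insertNthEquiv]
  have hcase : ∀ k : Fin (n+1), k = j ∨ ∃ k', k = j.succAbove k' := by
    intro k
    rcases eq_or_ne k j with h | h
    · exact Or.inl h
    · exact Or.inr ((Fin.exists_succAbove_eq h).imp fun k' hk' => hk'.symm)
  by_cases hy : ∀ k, y k ∈ Ioo (0:ℝ) 1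
  · -- interior slice
    have hwmem : ∀ x : ℝ, w x ∈ Ω ↔ x ∈ Ioo (0:ℝ) 1 := by
      intro x
      constructor
      · intro h
        have := h j (mem_univ j)
        simpa [hwdef] using this
      · intro hx k _
        rcases hcase k with rfl | ⟨k', rfl⟩
        · simpa [hwdef] using hx
        · simpa [hwdef] using hy k'
    have hwIcc : ∀ x ∈ Icc (0:ℝ) 1, w x ∈ univ.pi fun _ : Fin (n+1) => Icc (0:ℝ) 1 := by
      intro x hx k _
      rcases hcase k with rfl | ⟨k', rfl⟩
      · simpa [hwdef] using hx
      · simpa [hwdef] using Ioo_subset_Icc_self (hy k')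
    have hwcont : Continuous w := by
      rw [hwdef]
      refine continuous_pi fun k => ?_
      rcases hcase k with rfl | ⟨k', rfl⟩
      · simp only [Fin.insertNth_apply_same]; exact continuous_id
      · simp only [Fin.insertNth_apply_succAbove]; exact continuous_const
    -- indicator rewriting for any φ
    have hindic : ∀ φ : (Fin (n+1) → ℝ) → ℝ, (fun x : ℝ => Ω.indicator φ (e.symm (x, y)))
        = (Ioo (0:ℝ) 1).indicator (fun x => φ (w x)) := by
      intro φ
      funext x
      rw [hesymm x]
      by_cases hx : x ∈ Ioo (0:ℝ) 1
      · rw [indicator_of_mem ((hwmem x).2 hx), indicator_of_mem hx]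
      · rw [indicator_of_notMem (fun h => hx ((hwmem x).1 h)),
          indicator_of_notMem hx]
    -- derivative facts
    have hupd : ∀ x t : ℝ, Function.update (w x) j t = w t := by
      intro x t
      rw [hwdef]
      exact Fin.update_insertNth (α := fun _ => ℝ) j x t y
    have hwj : ∀ x : ℝ, w x j = x := fun x => by simp [hwdef]
    have hderG : ∀ x ∈ Ioo (0:ℝ) 1,
        HasDerivAt (fun t => G1 (w t)) (pderivCoord j G1 (w x)) x := by
      intro x hx
      have hdiff : DifferentiableAt ℝ G1 (w x) :=
        (hg.differentiableOn one_ne_zero).differentiableAt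
          (hΩopen.mem_nhds ((hwmem x).2 hx))
      have h := hasDerivAt_pderivCoord j G1 (w x) hdiff
      rw [show (fun t => G1 (Function.update (w x) j t)) = fun t => G1 (w t) from
        funext fun t => by rw [hupd x t], hwj x] at h
      exact h
    have hderC : ∀ x ∈ Ioo (0:ℝ) 1,
        HasDerivAt (fun t => c₀ (w t)) (pderivCoord j c₀ (w x)) x := by
      intro x hx
      have hdiff : DifferentiableAt ℝ c₀ (w x) :=
        (hc.differentiableOn one_ne_zero).differentiableAt
          (hΩopen.mem_nhds ((hwmem x).2 hx))
      have h := hasDerivAt_pderivCoord j c₀ (w x) hdiff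
      rw [show (fun t => c₀ (Function.update (w x) j t)) = fun t => c₀ (w t) from
        funext fun t => by rw [hupd x t], hwj x] at h
      exact h
    -- slice integrability
    have hi1 : IntegrableOn (fun x => pderivCoord j G1 (w x) * c₀ (w x)) (Ioo 0 1) := by
      rw [hindic F1] at hy1
      exact (integrable_indicator_iff measurableSet_Ioo).1 hy1
    have hi2 : IntegrableOn (fun x => G1 (w x) * pderivCoord j c₀ (w x)) (Ioo 0 1) := by
      rw [hindic F2] at hy2
      exact (integrable_indicator_iff measurableSet_Ioo).1 hy2
    -- conclude
    rw [hindic F, integral_indicator measurableSet_Ioo]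
    refine oned_ibp (fun x => G1 (w x)) (fun x => pderivCoord j G1 (w x))
      (fun x => c₀ (w x)) (fun x => pderivCoord j c₀ (w x))
      (hgcont.comp hwcont.continuousOn hwIcc) hderG hderC
      (fun x hx => hcpos _ ((hwmem x).2 hx)) ?_ ?_ hi1 hi2
    · exact hbdry (w 0) (hwIcc 0 (by norm_num)) (Or.inl (hwj 0))
    · exact hbdry (w 1) (hwIcc 1 (by norm_num)) (Or.inr (hwj 1))
  · -- boundary slice: indicator vanishes
    push_neg at hy
    obtain ⟨k, hk⟩ := hy
    have hnot : ∀ x : ℝ, e.symm (x, y) ∉ Ω := by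
      intro x h
      refine hk ?_
      have := h (j.succAbove k) (mem_univ _)
      rw [hesymm x] at this
      simpa [hwdef] using this
    have : (fun x : ℝ => Ω.indicator F (e.symm (x, y))) = fun _ => 0 :=
      funext fun x => indicator_of_notMem (hnot x) F
    rw [this]
    simp

end SteinAux2

section SteinMain
open Set Filter

/-- **Stein identity for the Copula-Stein operator.** If `c₀` is `C¹` and positive on
`(0,1)ᵈ`, and `g` has `C¹` components extending continuously to `[0,1]ᵈ` that vanish on
the faces `{u_j = 0}` and `{u_j = 1}`, with the relevant integrability, then
`∫ Σⱼ [∂ⱼgⱼ·c₀ + gⱼ·∂ⱼc₀] = 0`; equivalently `∫ Σⱼ [∂ⱼgⱼ + gⱼ·∂ⱼ log c₀] c₀ = 0`. -/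
theorem stein_identity (d : ℕ) (hd : 1 ≤ d)
    (c₀ : (Fin d → ℝ) → ℝ) (g : (Fin d → ℝ) → Fin d → ℝ)
    (Ω : Set (Fin d → ℝ)) (hΩ : Ω = Set.univ.pi fun _ => Set.Ioo (0:ℝ) 1)
    (hc : ContDiffOn ℝ 1 c₀ Ω) (hcpos : ∀ u ∈ Ω, 0 < c₀ u)
    (hg : ∀ j, ContDiffOn ℝ 1 (fun u => g u j) Ω)
    (hgcont : ∀ j, ContinuousOn (fun u => g u j)
      (Set.univ.pi fun _ => Set.Icc (0:ℝ) 1))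
    (hbdry : ∀ j, ∀ u ∈ Set.univ.pi fun _ : Fin d => Set.Icc (0:ℝ) 1,
      (u j = 0 ∨ u j = 1) → g u j = 0)
    (hint1 : ∀ j, IntegrableOn
      (fun u => pderivCoord j (fun v => g v j) u * c₀ u) Ω volume)
    (hint2 : ∀ j, IntegrableOn
      (fun u => g u j * pderivCoord j c₀ u) Ω volume) :
    (∫ u in Ω, ∑ j, (pderivCoord j (fun v => g v j) u * c₀ u
        + g u j * pderivCoord j c₀ u)) = 0 ∧
    (∫ u in Ω, (∑ j, (pderivCoord j (fun v => g v j) u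
        + g u j * pderivCoord j (fun v => Real.log (c₀ v)) u)) * c₀ u) = 0 := by
  have hΩmeas : MeasurableSet Ω := by
    rw [hΩ]; exact MeasurableSet.univ_pi fun _ => measurableSet_Ioo
  have hΩopen : IsOpen Ω := by
    rw [hΩ]; exact isOpen_set_pi finite_univ fun _ _ => isOpen_Ioo
  -- first identity
  have main : (∫ u in Ω, ∑ j, (pderivCoord j (fun v => g v j) u * c₀ u
      + g u j * pderivCoord j c₀ u)) = 0 := by
    have hsum := integral_finset_sum (μ := volume.restrict Ω) Finset.univ
      (f := fun j u => pderivCoord j (fun v => g v j) u * c₀ u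
        + g u j * pderivCoord j c₀ u) (fun j _ => (hint1 j).add (hint2 j))
    rw [hsum]
    refine Finset.sum_eq_zero fun j _ => ?_
    obtain ⟨n, rfl⟩ : ∃ n, d = n + 1 := ⟨d - 1, (Nat.succ_pred_eq_of_pos hd).symm⟩
    subst hΩ
    exact coord_integral_zero j c₀ (fun v => g v j) hc hcpos (hg j) (hgcont j)
      (hbdry j) (hint1 j) (hint2 j)
  refine ⟨main, ?_⟩
  -- second form equals the first on Ω
  have hcongr : ∀ u ∈ Ω, (∑ j, (pderivCoord j (fun v => g v j) u
      + g u j * pderivCoord j (fun v => Real.log (c₀ v)) u)) * c₀ u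
      = ∑ j, (pderivCoord j (fun v => g v j) u * c₀ u
        + g u j * pderivCoord j c₀ u) := by
    intro u hu
    have hc0 : c₀ u ≠ 0 := ne_of_gt (hcpos u hu)
    have hlog : ∀ j : Fin d, pderivCoord j (fun v => Real.log (c₀ v)) u
        = pderivCoord j c₀ u / c₀ u := by
      intro j
      have hdiff : DifferentiableAt ℝ c₀ u :=
        (hc.differentiableOn one_ne_zero).differentiableAt (hΩopen.mem_nhds hu)
      have h1 := hasDerivAt_pderivCoord j c₀ u hdiff
      have hne : c₀ (Function.update u j (u j)) ≠ 0 := by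
        rwa [Function.update_eq_self]
      have h2 := h1.log hne
      rw [Function.update_eq_self] at h2
      exact h2.deriv
    rw [Finset.sum_mul]
    refine Finset.sum_congr rfl fun j _ => ?_
    rw [hlog j]
    field_simp
  rw [setIntegral_congr_fun hΩmeas hcongr]
  exact main

end SteinMain
end

section
/- Let X be a measurable space, μ a probability measure on X, and H a real Hilbert space. Let ξ : X → H be strongly measurable with ∫ ξ dμ = 0, m₂ := ∫ ‖ξ(x)‖² dμ(x) < ∞ and m₄ := ∫ ‖ξ(x)‖⁴ dμ(x) < ∞. Let U₁,…,U_n be independent with law μ and set V_n = (1/n²) Σ_{i,j=1}^n ⟨ξ(U_i), ξ(U_j)⟩. Then Var(V_n) ≤ (3·m₂² + m₄)/n². -/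
open MeasureTheory ProbabilityTheory
open scoped RealInnerProductSpace

lemma zero_term_aux {Ω : Type*} [MeasurableSpace Ω] (P : Measure Ω)
    [IsProbabilityMeasure P]
    {X : Type*} [MeasurableSpace X] (μ : Measure X) [IsProbabilityMeasure μ]
    {H : Type*} [NormedAddCommGroup H] [InnerProductSpace ℝ H] [CompleteSpace H]
    (ξ : X → H) (hmeas : StronglyMeasurable ξ)
    (hint : Integrable ξ μ) (hzero : (∫ x, ξ x ∂μ) = 0)
    (hm2 : Integrable (fun x => ‖ξ x‖ ^ 2) μ)
    (hm4 : Integrable (fun x => ‖ξ x‖ ^ 4) μ)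
    (n : ℕ) (U : Fin n → Ω → X)
    (hUmeas : ∀ i, Measurable (U i))
    (hindep : iIndepFun U P)
    (hlaw : ∀ i, P.map (U i) = μ)
    (a j k l : Fin n) (haj : a ≠ j) (hak : a ≠ k) (hal : a ≠ l) :
    ∫ ω, ⟪ξ (U a ω), ξ (U j ω)⟫ * ⟪ξ (U k ω), ξ (U l ω)⟫ ∂P = 0 := by
  classical
  -- integrability of powers of norms
  have hIcomp : ∀ (i : Fin n) (g : X → ℝ), StronglyMeasurable g → Integrable g μ →
      Integrable (fun ω => g (U i ω)) P := by
    intro i g hgsm hgint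
    have := (integrable_map_measure hgsm.aestronglyMeasurable (hUmeas i).aemeasurable).mp
      (by rwa [hlaw i])
    exact this
  have hI2 : ∀ i, Integrable (fun ω => ‖ξ (U i ω)‖ ^ 2) P := fun i =>
    hIcomp i _ ((hmeas.norm.measurable.pow_const 2).stronglyMeasurable) hm2
  have hI4 : ∀ i, Integrable (fun ω => ‖ξ (U i ω)‖ ^ 4) P := fun i =>
    hIcomp i _ ((hmeas.norm.measurable.pow_const 4).stronglyMeasurable) hm4
  have hI3 : ∀ i, Integrable (fun ω => ‖ξ (U i ω)‖ ^ 3) P := by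
    intro i
    refine ((hI2 i).add (hI4 i)).mono'
      ((hmeas.norm.measurable.pow_const 3).stronglyMeasurable.comp_measurable (hUmeas i)).aestronglyMeasurable
      (Filter.Eventually.of_forall fun ω => ?_)
    have h0 : (0:ℝ) ≤ ‖ξ (U i ω)‖ := norm_nonneg _
    rw [Real.norm_eq_abs, abs_of_nonneg (by positivity)]
    simp only [Pi.add_apply]
    nlinarith [sq_nonneg (‖ξ (U i ω)‖^2 - ‖ξ (U i ω)‖), sq_nonneg (‖ξ (U i ω)‖)]
  set W : Ω → X × X × X := fun ω => (U j ω, U k ω, U l ω) with hW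
  have hWmeas : Measurable W := (hUmeas j).prodMk ((hUmeas k).prodMk (hUmeas l))
  set ψ : X × X × X → H := fun p => ⟪ξ p.2.1, ξ p.2.2⟫ • ξ p.1 with hψ
  have hψsm : StronglyMeasurable ψ :=
    ((hmeas.comp_measurable (measurable_fst.comp measurable_snd)).inner
      (hmeas.comp_measurable (measurable_snd.comp measurable_snd))).smul
      (hmeas.comp_measurable measurable_fst)
  have hIndep : IndepFun (U a) W P := by
    have hdisj : Disjoint ({a} : Finset (Fin n)) ({j, k, l} : Finset (Fin n)) := by
      simp only [Finset.disjoint_left, Finset.mem_singleton, Finset.mem_insert]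
      rintro x rfl
      simp [haj, hak, hal]
    have h := hindep.indepFun_finset {a} {j, k, l} hdisj hUmeas
    have hja : j ∈ ({j, k, l} : Finset (Fin n)) := by simp
    have hka : k ∈ ({j, k, l} : Finset (Fin n)) := by simp
    have hla : l ∈ ({j, k, l} : Finset (Fin n)) := by simp
    exact h.comp (measurable_pi_apply (⟨a, by simp⟩ : ({a} : Finset (Fin n))))
      ((measurable_pi_apply (⟨j, hja⟩ : ({j,k,l} : Finset (Fin n)))).prodMk
        ((measurable_pi_apply ⟨k, hka⟩).prodMk (measurable_pi_apply ⟨l, hla⟩)))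
  set ν : Measure (X × X × X) := P.map W with hν
  haveI : IsProbabilityMeasure ν := Measure.isProbabilityMeasure_map hWmeas.aemeasurable
  have hmap : P.map (fun ω => (U a ω, W ω)) = μ.prod ν := by
    rw [← hlaw a]
    exact (indepFun_iff_map_prod_eq_prod_map_map (hUmeas a).aemeasurable
      hWmeas.aemeasurable).mp hIndep
  have hψint : Integrable ψ ν := by
    rw [hν, integrable_map_measure hψsm.aestronglyMeasurable hWmeas.aemeasurable]
    refine (((hI3 j).add (hI3 k)).add (hI3 l)).mono'
      (hψsm.comp_measurable hWmeas).aestronglyMeasurable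
      (Filter.Eventually.of_forall fun ω => ?_)
    show ‖(⟪ξ (U k ω), ξ (U l ω)⟫ : ℝ) • ξ (U j ω)‖ ≤ _
    rw [norm_smul, Real.norm_eq_abs]
    have h1 : |(⟪ξ (U k ω), ξ (U l ω)⟫ : ℝ)| ≤ ‖ξ (U k ω)‖ * ‖ξ (U l ω)‖ :=
      abs_real_inner_le_norm _ _
    have h2 := norm_nonneg (ξ (U j ω))
    have h3 := norm_nonneg (ξ (U k ω))
    have h4 := norm_nonneg (ξ (U l ω))
    have h5 : |(⟪ξ (U k ω), ξ (U l ω)⟫ : ℝ)| * ‖ξ (U j ω)‖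
        ≤ ‖ξ (U k ω)‖ * ‖ξ (U l ω)‖ * ‖ξ (U j ω)‖ := by
      apply mul_le_mul_of_nonneg_right h1 h2
    refine h5.trans ?_
    simp only [Pi.add_apply]
    nlinarith [sq_nonneg (‖ξ (U k ω)‖ - ‖ξ (U l ω)‖), sq_nonneg (‖ξ (U l ω)‖ - ‖ξ (U j ω)‖),
      sq_nonneg (‖ξ (U k ω)‖ - ‖ξ (U j ω)‖), mul_nonneg h3 h4, mul_nonneg h4 h2,
      mul_nonneg h3 h2, sq_nonneg (‖ξ (U k ω)‖ + ‖ξ (U l ω)‖ + ‖ξ (U j ω)‖)]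
  have hprodsm : StronglyMeasurable (fun p : X × (X × X × X) => (⟪ξ p.1, ψ p.2⟫ : ℝ)) :=
    (hmeas.comp_measurable measurable_fst).inner (hψsm.comp_measurable measurable_snd)
  have hprodint : Integrable (fun p : X × (X × X × X) => (⟪ξ p.1, ψ p.2⟫ : ℝ)) (μ.prod ν) := by
    refine (hint.norm.mul_prod hψint.norm).mono' hprodsm.aestronglyMeasurable
      (Filter.Eventually.of_forall fun p => ?_)
    rw [Real.norm_eq_abs]
    exact abs_real_inner_le_norm _ _
  calc ∫ ω, ⟪ξ (U a ω), ξ (U j ω)⟫ * ⟪ξ (U k ω), ξ (U l ω)⟫ ∂P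
      = ∫ ω, ⟪ξ (U a ω), ψ (W ω)⟫ ∂P := by
        refine integral_congr_ae (Filter.Eventually.of_forall fun ω => ?_)
        simp [hψ, hW, real_inner_smul_right, mul_comm]
    _ = ∫ p, ⟪ξ p.1, ψ p.2⟫ ∂(μ.prod ν) := by
        rw [← hmap, integral_map ((hUmeas a).prodMk hWmeas).aemeasurable
          hprodsm.aestronglyMeasurable]
    _ = ∫ x, ∫ w, ⟪ξ x, ψ w⟫ ∂ν ∂μ := integral_prod _ hprodint
    _ = ∫ x, ⟪ξ x, ∫ w, ψ w ∂ν⟫ ∂μ := by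
        refine integral_congr_ae (Filter.Eventually.of_forall fun x => ?_)
        exact ((innerSL ℝ (ξ x)).integral_comp_comm hψint)
    _ = ⟪∫ x, ξ x ∂μ, ∫ w, ψ w ∂ν⟫ := by
        have h := ((innerSL ℝ (∫ w, ψ w ∂ν)).integral_comp_comm hint)
        simp only [innerSL_apply_apply] at h
        calc ∫ x, ⟪ξ x, ∫ w, ψ w ∂ν⟫ ∂μ
            = ∫ x, ⟪∫ w, ψ w ∂ν, ξ x⟫ ∂μ :=
              integral_congr_ae (Filter.Eventually.of_forall fun x => real_inner_comm _ _)
          _ = ⟪∫ w, ψ w ∂ν, ∫ x, ξ x ∂μ⟫ := h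
          _ = ⟪∫ x, ξ x ∂μ, ∫ w, ψ w ∂ν⟫ := real_inner_comm _ _
    _ = 0 := by rw [hzero, inner_zero_left]

/-- **Variance bound for the V-statistic.** For a centered witness map `ξ` with finite
second moment `m₂` and fourth moment `m₄`, the variance of the V-statistic
`Vₙ = (1/n²) Σᵢⱼ ⟪ξ(Uᵢ), ξ(Uⱼ)⟫` built from i.i.d. `U₁,…,Uₙ ∼ μ` satisfies
`Var(Vₙ) ≤ (3 m₂² + m₄)/n²`. -/
theorem vstat_variance_bound {Ω : Type*} [MeasurableSpace Ω] (P : Measure Ω)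
    [IsProbabilityMeasure P]
    {X : Type*} [MeasurableSpace X] (μ : Measure X) [IsProbabilityMeasure μ]
    {H : Type*} [NormedAddCommGroup H] [InnerProductSpace ℝ H] [CompleteSpace H]
    (ξ : X → H) (hmeas : StronglyMeasurable ξ)
    (hint : Integrable ξ μ) (hzero : (∫ x, ξ x ∂μ) = 0)
    (hm2 : Integrable (fun x => ‖ξ x‖ ^ 2) μ)
    (hm4 : Integrable (fun x => ‖ξ x‖ ^ 4) μ)
    (n : ℕ) (hn : 1 ≤ n) (U : Fin n → Ω → X)
    (hUmeas : ∀ i, Measurable (U i))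
    (hindep : iIndepFun U P)
    (hlaw : ∀ i, P.map (U i) = μ) :
    variance (fun ω => (1 / (n : ℝ) ^ 2) * ∑ i, ∑ j, ⟪ξ (U i ω), ξ (U j ω)⟫) P
      ≤ (3 * (∫ x, ‖ξ x‖ ^ 2 ∂μ) ^ 2 + ∫ x, ‖ξ x‖ ^ 4 ∂μ) / (n : ℝ) ^ 2 := by
  classical
  set m2 : ℝ := ∫ x, ‖ξ x‖ ^ 2 ∂μ with hm2def
  set m4 : ℝ := ∫ x, ‖ξ x‖ ^ 4 ∂μ with hm4def
  have hm2nn : 0 ≤ m2 := integral_nonneg fun x => by positivity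
  have hm4nn : 0 ≤ m4 := integral_nonneg fun x => by positivity
  have hn1 : (1:ℝ) ≤ (n:ℝ) := by exact_mod_cast hn
  have hnne : ((n:ℝ)) ≠ 0 := by positivity
  have hfsm : ∀ i : Fin n, StronglyMeasurable fun ω => ξ (U i ω) := fun i =>
    hmeas.comp_measurable (hUmeas i)
  have hIcomp : ∀ (i : Fin n) (g : X → ℝ), StronglyMeasurable g → Integrable g μ →
      Integrable (fun ω => g (U i ω)) P := by
    intro i g hgsm hgint
    exact (integrable_map_measure hgsm.aestronglyMeasurable (hUmeas i).aemeasurable).mp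
      (by rwa [hlaw i])
  have hsm2 : StronglyMeasurable fun x => ‖ξ x‖ ^ 2 :=
    (hmeas.norm.measurable.pow_const 2).stronglyMeasurable
  have hsm4 : StronglyMeasurable fun x => ‖ξ x‖ ^ 4 :=
    (hmeas.norm.measurable.pow_const 4).stronglyMeasurable
  have hI2 : ∀ i, Integrable (fun ω => ‖ξ (U i ω)‖ ^ 2) P := fun i => hIcomp i _ hsm2 hm2
  have hI4 : ∀ i, Integrable (fun ω => ‖ξ (U i ω)‖ ^ 4) P := fun i => hIcomp i _ hsm4 hm4
  have hint2 : ∀ i, ∫ ω, ‖ξ (U i ω)‖ ^ 2 ∂P = m2 := by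
    intro i
    rw [hm2def, ← hlaw i, integral_map (hUmeas i).aemeasurable hsm2.aestronglyMeasurable]
  have hint4 : ∀ i, ∫ ω, ‖ξ (U i ω)‖ ^ 4 ∂P = m4 := by
    intro i
    rw [hm4def, ← hlaw i, integral_map (hUmeas i).aemeasurable hsm4.aestronglyMeasurable]
  have hTsm : ∀ i j : Fin n, StronglyMeasurable fun ω => (⟪ξ (U i ω), ξ (U j ω)⟫ : ℝ) :=
    fun i j => (hfsm i).inner (hfsm j)
  have hTint : ∀ i j k l : Fin n,
      Integrable (fun ω => ⟪ξ (U i ω), ξ (U j ω)⟫ * ⟪ξ (U k ω), ξ (U l ω)⟫) P := by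
    intro i j k l
    refine ((((hI4 i).add (hI4 j)).add (hI4 k)).add (hI4 l)).mono'
      ((hTsm i j).mul (hTsm k l)).aestronglyMeasurable
      (Filter.Eventually.of_forall fun ω => ?_)
    simp only [Pi.add_apply]
    rw [Real.norm_eq_abs, abs_mul]
    have h1 := abs_real_inner_le_norm (ξ (U i ω)) (ξ (U j ω))
    have h2 := abs_real_inner_le_norm (ξ (U k ω)) (ξ (U l ω))
    have h3 : |(⟪ξ (U i ω), ξ (U j ω)⟫ : ℝ)| * |(⟪ξ (U k ω), ξ (U l ω)⟫ : ℝ)|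
        ≤ (‖ξ (U i ω)‖ * ‖ξ (U j ω)‖) * (‖ξ (U k ω)‖ * ‖ξ (U l ω)‖) :=
      mul_le_mul h1 h2 (abs_nonneg _) (by positivity)
    refine h3.trans ?_
    set A := ‖ξ (U i ω)‖; set B := ‖ξ (U j ω)‖; set C := ‖ξ (U k ω)‖; set D := ‖ξ (U l ω)‖
    have hA : 0 ≤ A := norm_nonneg _
    have hB : 0 ≤ B := norm_nonneg _
    have hC : 0 ≤ C := norm_nonneg _
    have hD : 0 ≤ D := norm_nonneg _
    nlinarith [sq_nonneg (A*B - C*D), sq_nonneg (A^2 - B^2), sq_nonneg (C^2 - D^2),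
      mul_nonneg hA hB, mul_nonneg hC hD, sq_nonneg (A*B + C*D)]
  have hpair : ∀ i j : Fin n, i ≠ j →
      ∫ ω, ‖ξ (U i ω)‖ ^ 2 * ‖ξ (U j ω)‖ ^ 2 ∂P = m2 * m2 := by
    intro i j hij
    have hind : IndepFun (fun ω => ‖ξ (U i ω)‖ ^ 2) (fun ω => ‖ξ (U j ω)‖ ^ 2) P :=
      (hindep.indepFun hij).comp hsm2.measurable hsm2.measurable
    have h := hind.integral_mul_eq_mul_integral (hsm2.comp_measurable (hUmeas i)).aestronglyMeasurable
      (hsm2.comp_measurable (hUmeas j)).aestronglyMeasurable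
    have e : ((fun ω => ‖ξ (U i ω)‖ ^ 2) * fun ω => ‖ξ (U j ω)‖ ^ 2)
        = fun ω => ‖ξ (U i ω)‖ ^ 2 * ‖ξ (U j ω)‖ ^ 2 := rfl
    rw [e] at h
    rw [h, hint2 i, hint2 j]
  have hIpair : ∀ i j : Fin n, i ≠ j →
      Integrable (fun ω => ‖ξ (U i ω)‖ ^ 2 * ‖ξ (U j ω)‖ ^ 2) P := by
    intro i j hij
    have hind : IndepFun (fun ω => ‖ξ (U i ω)‖ ^ 2) (fun ω => ‖ξ (U j ω)‖ ^ 2) P :=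
      (hindep.indepFun hij).comp hsm2.measurable hsm2.measurable
    exact hind.integrable_mul (hI2 i) (hI2 j)
  have hCS : ∀ (i j : Fin n) (ω : Ω),
      (⟪ξ (U i ω), ξ (U j ω)⟫ : ℝ) * ⟪ξ (U i ω), ξ (U j ω)⟫
        ≤ ‖ξ (U i ω)‖ ^ 2 * ‖ξ (U j ω)‖ ^ 2 := by
    intro i j ω
    have h := real_inner_mul_inner_self_le (ξ (U i ω)) (ξ (U j ω))
    rwa [real_inner_self_eq_norm_sq, real_inner_self_eq_norm_sq] at h
  -- the four "lone index" vanishing variants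
  have hz1 : ∀ i j k l : Fin n, i ≠ j → i ≠ k → i ≠ l →
      ∫ ω, ⟪ξ (U i ω), ξ (U j ω)⟫ * ⟪ξ (U k ω), ξ (U l ω)⟫ ∂P = 0 :=
    fun i j k l h1 h2 h3 =>
      zero_term_aux P μ ξ hmeas hint hzero hm2 hm4 n U hUmeas hindep hlaw i j k l h1 h2 h3
  have hz2 : ∀ i j k l : Fin n, j ≠ i → j ≠ k → j ≠ l →
      ∫ ω, ⟪ξ (U i ω), ξ (U j ω)⟫ * ⟪ξ (U k ω), ξ (U l ω)⟫ ∂P = 0 := by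
    intro i j k l h1 h2 h3
    rw [show (fun ω => (⟪ξ (U i ω), ξ (U j ω)⟫ : ℝ) * ⟪ξ (U k ω), ξ (U l ω)⟫)
        = fun ω => (⟪ξ (U j ω), ξ (U i ω)⟫ : ℝ) * ⟪ξ (U k ω), ξ (U l ω)⟫ from
      funext fun ω => by rw [real_inner_comm]]
    exact hz1 j i k l h1 h2 h3
  have hz3 : ∀ i j k l : Fin n, k ≠ l → k ≠ i → k ≠ j →
      ∫ ω, ⟪ξ (U i ω), ξ (U j ω)⟫ * ⟪ξ (U k ω), ξ (U l ω)⟫ ∂P = 0 := by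
    intro i j k l h1 h2 h3
    rw [show (fun ω => (⟪ξ (U i ω), ξ (U j ω)⟫ : ℝ) * ⟪ξ (U k ω), ξ (U l ω)⟫)
        = fun ω => (⟪ξ (U k ω), ξ (U l ω)⟫ : ℝ) * ⟪ξ (U i ω), ξ (U j ω)⟫ from
      funext fun ω => by rw [mul_comm]]
    exact hz1 k l i j h1 h2 h3
  have hz4 : ∀ i j k l : Fin n, l ≠ k → l ≠ i → l ≠ j →
      ∫ ω, ⟪ξ (U i ω), ξ (U j ω)⟫ * ⟪ξ (U k ω), ξ (U l ω)⟫ ∂P = 0 := by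
    intro i j k l h1 h2 h3
    rw [show (fun ω => (⟪ξ (U i ω), ξ (U j ω)⟫ : ℝ) * ⟪ξ (U k ω), ξ (U l ω)⟫)
        = fun ω => (⟪ξ (U l ω), ξ (U k ω)⟫ : ℝ) * ⟪ξ (U i ω), ξ (U j ω)⟫ from
      funext fun ω => by rw [mul_comm, real_inner_comm (ξ (U k ω))]]
    exact hz1 l k i j h1 h2 h3
  set b : Fin n → Fin n → Fin n → Fin n → ℝ := fun i j k l =>
    (if i = j ∧ k = l then m2 ^ 2 else 0) + (if i = k ∧ j = l then m2 ^ 2 else 0)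
      + (if i = l ∧ j = k then m2 ^ 2 else 0)
      + (if i = j ∧ i = k ∧ k = l then m4 else 0) with hbdef
  have hbnn : ∀ i j k l : Fin n, 0 ≤ b i j k l := by
    intro i j k l
    have h2 : (0:ℝ) ≤ m2 ^ 2 := sq_nonneg _
    refine add_nonneg (add_nonneg (add_nonneg ?_ ?_) ?_) ?_ <;> split <;> first | positivity | rfl
  have hterm : ∀ i j k l : Fin n,
      ∫ ω, ⟪ξ (U i ω), ξ (U j ω)⟫ * ⟪ξ (U k ω), ξ (U l ω)⟫ ∂P ≤ b i j k l := by
    intro i j k l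
    by_cases hij : i = j
    · by_cases hkl : k = l
      · subst hij; subst hkl
        have hrw : ∀ ω, (⟪ξ (U i ω), ξ (U i ω)⟫ : ℝ) * ⟪ξ (U k ω), ξ (U k ω)⟫
            = ‖ξ (U i ω)‖ ^ 2 * ‖ξ (U k ω)‖ ^ 2 := fun ω => by
          rw [real_inner_self_eq_norm_sq, real_inner_self_eq_norm_sq]
        by_cases hik : i = k
        · subst hik
          have : ∫ ω, ⟪ξ (U i ω), ξ (U i ω)⟫ * ⟪ξ (U i ω), ξ (U i ω)⟫ ∂P = m4 := by
            rw [show (fun ω => (⟪ξ (U i ω), ξ (U i ω)⟫ : ℝ) * ⟪ξ (U i ω), ξ (U i ω)⟫)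
                = fun ω => ‖ξ (U i ω)‖ ^ 4 from funext fun ω => by
              rw [hrw ω]; ring]
            exact hint4 i
          rw [this, hbdef]
          simp only [and_self, if_true]
          nlinarith [sq_nonneg m2]
        · have : ∫ ω, ⟪ξ (U i ω), ξ (U i ω)⟫ * ⟪ξ (U k ω), ξ (U k ω)⟫ ∂P = m2 * m2 := by
            rw [show (fun ω => (⟪ξ (U i ω), ξ (U i ω)⟫ : ℝ) * ⟪ξ (U k ω), ξ (U k ω)⟫)
                = fun ω => ‖ξ (U i ω)‖ ^ 2 * ‖ξ (U k ω)‖ ^ 2 from funext hrw]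
            exact hpair i k hik
          rw [this, hbdef]
          simp only [hik, if_true, and_self, if_false, false_and, and_false, add_zero, zero_add]
          nlinarith [sq_nonneg m2]
      · -- k ≠ l, i = j
        by_cases hki : k = i
        · refine (le_of_eq (hz4 i j k l ?_ ?_ ?_)).trans (hbnn i j k l)
          · exact fun h => hkl h.symm
          · exact fun h => hkl (hki.trans h.symm)
          · exact fun h => hkl ((hki.trans (hij.symm ▸ h.symm)))
        · refine (le_of_eq (hz3 i j k l hkl ?_ ?_)).trans (hbnn i j k l)
          · exact hki
          · exact fun h => hki (h.trans hij.symm)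
    · by_cases hik : i = k
      · by_cases hil : i = l
        · refine (le_of_eq (hz2 i j k l ?_ ?_ ?_)).trans (hbnn i j k l)
          · exact fun h => hij h.symm
          · exact fun h => hij (hik.trans h.symm)
          · exact fun h => hij (hil.trans h.symm)
        · by_cases hjl : j = l
          · -- pattern i = k, j = l
            subst hik; subst hjl
            have hle : ∫ ω, ⟪ξ (U i ω), ξ (U j ω)⟫ * ⟪ξ (U i ω), ξ (U j ω)⟫ ∂P
                ≤ m2 * m2 := by
              rw [← hpair i j hij]
              exact integral_mono (hTint i j i j) (hIpair i j hij)
                (fun ω => hCS i j ω)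
            refine hle.trans ?_
            rw [hbdef]
            simp only [hij, if_false, and_self, if_true, false_and, and_false, add_zero, zero_add]
            nlinarith [sq_nonneg m2]
          · refine (le_of_eq (hz4 i j k l ?_ ?_ ?_)).trans (hbnn i j k l)
            · exact fun h => hil (hik.trans h.symm)
            · exact fun h => hil h.symm
            · exact fun h => hjl h.symm
      · by_cases hil : i = l
        · by_cases hjk : j = k
          · -- pattern i = l, j = k
            subst hil; subst hjk
            have hle : ∫ ω, ⟪ξ (U i ω), ξ (U j ω)⟫ * ⟪ξ (U j ω), ξ (U i ω)⟫ ∂P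
                ≤ m2 * m2 := by
              rw [← hpair i j hij,
                show (fun ω => (⟪ξ (U i ω), ξ (U j ω)⟫ : ℝ) * ⟪ξ (U j ω), ξ (U i ω)⟫)
                  = fun ω => (⟪ξ (U i ω), ξ (U j ω)⟫ : ℝ) * ⟪ξ (U i ω), ξ (U j ω)⟫ from
                funext fun ω => by rw [real_inner_comm (ξ (U j ω))]]
              exact integral_mono (hTint i j i j) (hIpair i j hij) (fun ω => hCS i j ω)
            refine hle.trans ?_
            rw [hbdef]
            simp only [hij, hik, if_false, and_self, if_true, false_and, and_false,
              add_zero, zero_add]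
            nlinarith [sq_nonneg m2]
          · refine (le_of_eq (hz3 i j k l ?_ ?_ ?_)).trans (hbnn i j k l)
            · exact fun h => hik (hil.trans h.symm)
            · exact fun h => hik h.symm
            · exact fun h => hjk h.symm
        · exact (le_of_eq (hz1 i j k l hij hik hil)).trans (hbnn i j k l)
  -- expansion of the square of the double sum
  have hexp : ∀ ω : Ω, (∑ i, ∑ j, (⟪ξ (U i ω), ξ (U j ω)⟫ : ℝ)) ^ 2
      = ∑ k, ∑ l, ∑ i, ∑ j, (⟪ξ (U i ω), ξ (U j ω)⟫ : ℝ) * ⟪ξ (U k ω), ξ (U l ω)⟫ := by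
    intro ω
    rw [sq]
    simp only [Finset.sum_mul, Finset.mul_sum]
  have key : ∫ ω, (∑ i, ∑ j, (⟪ξ (U i ω), ξ (U j ω)⟫ : ℝ)) ^ 2 ∂P
      ≤ (n:ℝ) ^ 2 * (3 * m2 ^ 2 + m4) := by
    have hIsum3 : ∀ k : Fin n, Integrable
        (fun ω => ∑ l, ∑ i, ∑ j, (⟪ξ (U i ω), ξ (U j ω)⟫ : ℝ) * ⟪ξ (U k ω), ξ (U l ω)⟫) P :=
      fun k => integrable_finset_sum _ fun l _ => integrable_finset_sum _ fun i _ =>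
        integrable_finset_sum _ fun j _ => hTint i j k l
    calc ∫ ω, (∑ i, ∑ j, (⟪ξ (U i ω), ξ (U j ω)⟫ : ℝ)) ^ 2 ∂P
        = ∑ k, ∑ l, ∑ i, ∑ j,
            ∫ ω, (⟪ξ (U i ω), ξ (U j ω)⟫ : ℝ) * ⟪ξ (U k ω), ξ (U l ω)⟫ ∂P := by
          simp_rw [hexp]
          rw [integral_finset_sum _ fun k _ => hIsum3 k]
          refine Finset.sum_congr rfl fun k _ => ?_
          rw [integral_finset_sum _ fun l _ => integrable_finset_sum _ fun i _ =>
            integrable_finset_sum _ fun j _ => hTint i j k l]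
          refine Finset.sum_congr rfl fun l _ => ?_
          rw [integral_finset_sum _ fun i _ => integrable_finset_sum _ fun j _ => hTint i j k l]
          refine Finset.sum_congr rfl fun i _ => ?_
          rw [integral_finset_sum _ fun j _ => hTint i j k l]
      _ ≤ ∑ k, ∑ l, ∑ i, ∑ j, b i j k l :=
          Finset.sum_le_sum fun k _ => Finset.sum_le_sum fun l _ =>
            Finset.sum_le_sum fun i _ => Finset.sum_le_sum fun j _ => hterm i j k l
      _ = 3 * (n:ℝ) ^ 2 * m2 ^ 2 + n * m4 := by
          rw [hbdef]
          simp [Finset.sum_add_distrib, ite_and, Finset.sum_ite_eq, Finset.sum_ite_eq',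
            Finset.sum_const, Finset.card_univ]
          ring
      _ ≤ (n:ℝ) ^ 2 * (3 * m2 ^ 2 + m4) := by
          nlinarith [mul_le_mul_of_nonneg_right (show (n:ℝ) ≤ (n:ℝ) ^ 2 by nlinarith) hm4nn]
  -- conclude via Var ≤ E[V²]
  have hVsm : AEStronglyMeasurable
      (fun ω => (1 / (n : ℝ) ^ 2) * ∑ i, ∑ j, (⟪ξ (U i ω), ξ (U j ω)⟫ : ℝ)) P := by
    refine (Measurable.aestronglyMeasurable ?_)
    exact (Finset.measurable_sum _ fun i _ => Finset.measurable_sum _ fun j _ =>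
      (hTsm i j).measurable).const_mul _
  refine (variance_le_expectation_sq hVsm).trans ?_
  have hEq : (fun ω => (1 / (n : ℝ) ^ 2) * ∑ i, ∑ j, (⟪ξ (U i ω), ξ (U j ω)⟫ : ℝ)) ^ 2
      = fun ω => (1 / (n : ℝ) ^ 2) ^ 2
          * (∑ i, ∑ j, (⟪ξ (U i ω), ξ (U j ω)⟫ : ℝ)) ^ 2 := by
    funext ω
    simp [mul_pow]
  rw [hEq, integral_const_mul]
  have hfinal : (1 / (n : ℝ) ^ 2) ^ 2 * ((n:ℝ) ^ 2 * (3 * m2 ^ 2 + m4))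
      = (3 * m2 ^ 2 + m4) / (n : ℝ) ^ 2 := by
    field_simp
  calc (1 / (n : ℝ) ^ 2) ^ 2 * ∫ ω, (∑ i, ∑ j, (⟪ξ (U i ω), ξ (U j ω)⟫ : ℝ)) ^ 2 ∂P
      ≤ (1 / (n : ℝ) ^ 2) ^ 2 * ((n:ℝ) ^ 2 * (3 * m2 ^ 2 + m4)) :=
        mul_le_mul_of_nonneg_left key (by positivity)
    _ = (3 * m2 ^ 2 + m4) / (n : ℝ) ^ 2 := hfinal
end
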